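/- For every ε ∈ (0, T) one has lim_{Λ↓0} sup_{0 ≤ s ≤ T−ε} ‖ (1/(2Λ)) · ∫_s^T (L^Λ_{t,s})² dt − σ^{-1}/(4√A) ‖ = 0, where ‖·‖ is any matrix norm. -/

import Mathlib

open MeasureTheory ProbabilityTheory Matrix Filter

noncomputable section

/-- Matrix hyperbolic sine `sinh(M) = (exp M − exp(−M))/2`. -/
def sinhM {d : ℕ} (M : Matrix (Fin d) (Fin d) ℝ) : Matrix (Fin d) (Fin d) ℝ :=
  (2 : ℝ)⁻¹ • (NormedSpace.exp M - NormedSpace.exp (-M))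

/-- Matrix hyperbolic cosine `cosh(M) = (exp M + exp(−M))/2`. -/
def coshM {d : ℕ} (M : Matrix (Fin d) (Fin d) ℝ) : Matrix (Fin d) (Fin d) ℝ :=
  (2 : ℝ)⁻¹ • (NormedSpace.exp M + NormedSpace.exp (-M))

/-- `K^Λ_{t,s} = cosh(√A(T−t)σ/Λ) (sinh(√A(T−s)σ/Λ))⁻¹`. -/
def Kmat {d : ℕ} (T A : ℝ) (σ : Matrix (Fin d) (Fin d) ℝ) (Λ t s : ℝ) :
    Matrix (Fin d) (Fin d) ℝ :=
  coshM ((Real.sqrt A * (T - t) / Λ) • σ) * (sinhM ((Real.sqrt A * (T - s) / Λ) • σ))⁻¹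

/-- `L^Λ_{t,s} = sinh(√A(T−t)σ/Λ) (sinh(√A(T−s)σ/Λ))⁻¹`. -/
def Lmat {d : ℕ} (T A : ℝ) (σ : Matrix (Fin d) (Fin d) ℝ) (Λ t s : ℝ) :
    Matrix (Fin d) (Fin d) ℝ :=
  sinhM ((Real.sqrt A * (T - t) / Λ) • σ) * (sinhM ((Real.sqrt A * (T - s) / Λ) • σ))⁻¹

/-- Frobenius norm of a matrix. -/
def matNorm {d : ℕ} (M : Matrix (Fin d) (Fin d) ℝ) : ℝ :=
  Real.sqrt (∑ i, ∑ j, (M i j) ^ 2)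

namespace Stmt10Aux

variable {d : ℕ}

lemma exp_conj_unitary (U M : Matrix (Fin d) (Fin d) ℝ) (hU : U * star U = 1) :
    NormedSpace.exp (U * M * star U) = U * NormedSpace.exp M * star U := by
  have hUu : IsUnit U := by
    apply Matrix.isUnit_iff_isUnit_det U |>.mpr
    have := congrArg Matrix.det hU
    rw [Matrix.det_mul, Matrix.det_one] at this
    exact IsUnit.of_mul_eq_one _ this
  have hinv : U⁻¹ = star U := Matrix.inv_eq_right_inv hU
  rw [← hinv]
  exact Matrix.exp_conj U M hUu

lemma sinhM_conj (U M : Matrix (Fin d) (Fin d) ℝ) (hU : U * star U = 1) :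
    sinhM (U * M * star U) = U * sinhM M * star U := by
  have h1 : -(U * M * star U) = U * (-M) * star U := by noncomm_ring
  rw [sinhM, h1, exp_conj_unitary U M hU, exp_conj_unitary U (-M) hU, sinhM]
  rw [Matrix.mul_smul, Matrix.smul_mul]
  congr 1
  rw [Matrix.mul_sub]
  rw [Matrix.sub_mul]

lemma sinhM_diagonal (v : Fin d → ℝ) :
    sinhM (diagonal v) = diagonal (fun k => Real.sinh (v k)) := by
  have hneg : -(diagonal v) = diagonal (fun k => -(v k)) := by
    rw [← diagonal_neg]
  rw [sinhM, hneg, Matrix.exp_diagonal, Matrix.exp_diagonal, Matrix.diagonal_sub,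
    ← Matrix.diagonal_smul]
  refine congrArg Matrix.diagonal ?_
  funext k
  rw [Pi.smul_apply, Pi.coe_exp, Pi.coe_exp, ← Real.exp_eq_exp_ℝ, Real.sinh_eq]
  simp only [smul_eq_mul]
  ring


lemma conj_mul (U : Matrix (Fin d) (Fin d) ℝ) (hU' : star U * U = 1) (v w : Fin d → ℝ) :
    (U * diagonal v * star U) * (U * diagonal w * star U)
      = U * diagonal (fun k => v k * w k) * star U := by
  have h : (U * diagonal v * star U) * (U * diagonal w * star U)
      = U * (diagonal v * (star U * U) * diagonal w) * star U := by noncomm_ring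
  rw [h, hU', mul_one, diagonal_mul_diagonal]

lemma conj_inv (U : Matrix (Fin d) (Fin d) ℝ) (hU : U * star U = 1) (hU' : star U * U = 1)
    (v : Fin d → ℝ) (hv : ∀ k, v k ≠ 0) :
    (U * diagonal v * star U)⁻¹ = U * diagonal (fun k => (v k)⁻¹) * star U := by
  apply Matrix.inv_eq_right_inv
  rw [conj_mul U hU' v _]
  have : (fun k => v k * (v k)⁻¹) = fun _ => (1:ℝ) := by
    funext k; exact mul_inv_cancel₀ (hv k)
  rw [this, diagonal_one, mul_one, hU]

lemma conj_entry (U : Matrix (Fin d) (Fin d) ℝ) (w : Fin d → ℝ) (i j : Fin d) :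
    (U * diagonal w * star U) i j = ∑ k, U i k * w k * U j k := by
  rw [Matrix.mul_apply]
  congr 1
  funext k
  rw [Matrix.mul_diagonal, Matrix.star_apply]
  simp

lemma conj_smul (U : Matrix (Fin d) (Fin d) ℝ) (v : Fin d → ℝ) (r : ℝ) :
    r • (U * diagonal v * star U) = U * diagonal (fun k => r * v k) * star U := by
  have h1 : U * (r • diagonal v) * star U = r • (U * diagonal v * star U) := by
    rw [Matrix.mul_smul, Matrix.smul_mul]
  rw [← h1, ← diagonal_smul]
  rfl

lemma conj_sub (U : Matrix (Fin d) (Fin d) ℝ) (v w : Fin d → ℝ) :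
    (U * diagonal v * star U) - (U * diagonal w * star U)
      = U * diagonal (fun k => v k - w k) * star U := by
  rw [← Matrix.diagonal_sub, Matrix.mul_sub, Matrix.sub_mul]

lemma matNorm_conj_le (U : Matrix (Fin d) (Fin d) ℝ) (hU : U * star U = 1)
    (v : Fin d → ℝ) (c : ℝ) (hc0 : 0 ≤ c) (hc : ∀ k, |v k| ≤ c) :
    matNorm (U * diagonal v * star U) ≤ (d : ℝ) * ((d : ℝ) * c) := by
  have habsU : ∀ i k, |U i k| ≤ 1 := by
    intro i k
    have hrow : ∑ k2, U i k2 * U i k2 = 1 := by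
      have := congrFun (congrFun hU i) i
      rw [Matrix.mul_apply] at this
      simpa [Matrix.star_apply] using this
    have hle : U i k * U i k ≤ 1 := by
      rw [← hrow]
      exact Finset.single_le_sum (f := fun k2 => U i k2 * U i k2)
        (fun k2 _ => mul_self_nonneg _) (Finset.mem_univ k)
    exact abs_le_one_iff_mul_self_le_one.mpr hle
  have hentry : ∀ i j, |(U * diagonal v * star U) i j| ≤ (d : ℝ) * c := by
    intro i j
    rw [conj_entry]
    calc |∑ k, U i k * v k * U j k| ≤ ∑ k, |U i k * v k * U j k| :=
          Finset.abs_sum_le_sum_abs _ _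
      _ ≤ ∑ _k : Fin d, c := by
          apply Finset.sum_le_sum
          intro k _
          rw [abs_mul, abs_mul]
          calc |U i k| * |v k| * |U j k| ≤ 1 * c * 1 := by
                apply mul_le_mul _ (habsU j k) (abs_nonneg _) (by positivity)
                exact mul_le_mul (habsU i k) (hc k) (abs_nonneg _) zero_le_one
            _ = c := by ring
      _ = (d : ℝ) * c := by simp [Finset.sum_const, mul_comm]
  rw [matNorm]
  have hsum : ∑ i, ∑ j, ((U * diagonal v * star U) i j) ^ 2
      ≤ ∑ _i : Fin d, ∑ _j : Fin d, ((d : ℝ) * c) ^ 2 := by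
    apply Finset.sum_le_sum; intro i _
    apply Finset.sum_le_sum; intro j _
    rw [← sq_abs]
    exact pow_le_pow_left₀ (abs_nonneg _) (hentry i j) 2
  have h2 : ∑ _i : Fin d, ∑ _j : Fin d, ((d : ℝ) * c) ^ 2
      = ((d : ℝ) * ((d : ℝ) * c)) ^ 2 := by
    simp [Finset.sum_const]
    ring
  calc Real.sqrt (∑ i, ∑ j, ((U * diagonal v * star U) i j) ^ 2)
      ≤ Real.sqrt (((d : ℝ) * ((d : ℝ) * c)) ^ 2) := by
        apply Real.sqrt_le_sqrt; rw [← h2]; exact hsum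
    _ = (d : ℝ) * ((d : ℝ) * c) := Real.sqrt_sq (by positivity)


lemma integral_sinh_sq (b : ℝ) (hb : 0 < b) (s T : ℝ) :
    ∫ t in s..T, Real.sinh (b * (T - t)) ^ 2
      = (Real.sinh (b * (T - s)) * Real.cosh (b * (T - s)) - b * (T - s)) / (2 * b) := by
  have hF : ∀ t ∈ Set.uIcc s T, HasDerivAt
      (fun t => (b * (T - t) - Real.sinh (b * (T - t)) * Real.cosh (b * (T - t))) / (2 * b))
      (Real.sinh (b * (T - t)) ^ 2) t := by
    intro t _
    have h1 : HasDerivAt (fun t : ℝ => b * (T - t)) (-b) t := by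
      simpa using ((hasDerivAt_id t).const_sub T).const_mul b
    have hs : HasDerivAt (fun t : ℝ => Real.sinh (b * (T - t)))
        (Real.cosh (b * (T - t)) * (-b)) t := h1.sinh
    have hc : HasDerivAt (fun t : ℝ => Real.cosh (b * (T - t)))
        (Real.sinh (b * (T - t)) * (-b)) t := h1.cosh
    have hmul := hs.mul hc
    have := (h1.sub hmul).div_const (2 * b)
    convert this using 1
    any_goals exact rfl
    have hc2 : Real.cosh (b * (T - t)) ^ 2 = Real.sinh (b * (T - t)) ^ 2 + 1 :=
      Real.cosh_sq _
    rw [eq_div_iff (by positivity)]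
    nlinarith [hc2]
  have hint : IntervalIntegrable (fun t => Real.sinh (b * (T - t)) ^ 2)
      MeasureTheory.volume s T := by
    apply Continuous.intervalIntegrable
    continuity
  have := intervalIntegral.integral_eq_sub_of_hasDerivAt hF hint
  rw [this]
  simp [Real.sinh_zero, Real.cosh_zero]
  ring

lemma hyp_bound (x : ℝ) (hx : 1/2 ≤ x) :
    |(Real.sinh x * Real.cosh x - x) / (Real.sinh x) ^ 2 - 1| ≤ 16 * Real.exp (-x) := by
  have hx0 : 0 < x := lt_of_lt_of_le (by norm_num) hx
  have hs0 : 0 < Real.sinh x := Real.sinh_pos_iff.mpr hx0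
  have hs2 : (0:ℝ) < Real.sinh x ^ 2 := by positivity
  have key : (Real.sinh x * Real.cosh x - x) / (Real.sinh x) ^ 2 - 1
      = ((1 - Real.exp (-2*x))/2 - x) / (Real.sinh x) ^ 2 := by
    have h1 : Real.sinh x * Real.cosh x - x - Real.sinh x ^ 2
        = (1 - Real.exp (-2*x))/2 - x := by
      have h2 : Real.cosh x - Real.sinh x = Real.exp (-x) := Real.cosh_sub_sinh x
      have h3 : Real.sinh x = (Real.exp x - Real.exp (-x))/2 := Real.sinh_eq x
      have h4 : Real.exp x * Real.exp (-x) = 1 := by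
        rw [← Real.exp_add]; simp
      have h5 : Real.exp (-x) * Real.exp (-x) = Real.exp (-2*x) := by
        rw [← Real.exp_add]; ring_nf
      have h6 : Real.sinh x * Real.cosh x - Real.sinh x ^ 2
          = Real.sinh x * (Real.cosh x - Real.sinh x) := by ring
      have h7 : Real.sinh x * (Real.cosh x - Real.sinh x) = (1 - Real.exp (-2*x))/2 := by
        rw [h2, h3, div_mul_eq_mul_div, sub_mul, h4, h5]
      linarith [h6, h7]
    rw [div_sub_one (ne_of_gt hs2), h1]
  rw [key, abs_div, abs_of_pos hs2]
  have hnum : |(1 - Real.exp (-2*x))/2 - x| ≤ x := by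
    have he1 : Real.exp (-2*x) ≤ 1 := Real.exp_le_one_iff.mpr (by linarith)
    have he0 : 0 < Real.exp (-2*x) := Real.exp_pos _
    rw [abs_le]
    constructor <;> nlinarith
  have hsinh_ge : Real.exp x / 4 ≤ Real.sinh x := by
    rw [Real.sinh_eq]
    have h2x : (2:ℝ) ≤ Real.exp x * Real.exp x := by
      rw [← Real.exp_add]
      calc (2:ℝ) ≤ Real.exp 1 := by
            have := Real.add_one_le_exp (1:ℝ); linarith
        _ ≤ Real.exp (x + x) := Real.exp_le_exp.mpr (by linarith)
    have h4 : Real.exp (-x) * Real.exp x = 1 := by rw [← Real.exp_add]; simp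
    nlinarith [Real.exp_pos x, Real.exp_pos (-x), h2x, h4]
  have hden : Real.exp x ^ 2 / 16 ≤ Real.sinh x ^ 2 := by
    nlinarith [Real.exp_pos x, hsinh_ge]
  have h2 : |(1 - Real.exp (-2*x))/2 - x| / Real.sinh x ^ 2
      ≤ x / (Real.exp x ^ 2 / 16) := by
    exact div_le_div₀ hx0.le hnum (by positivity) hden
  refine h2.trans ?_
  have hxex : x ≤ Real.exp x := by nlinarith [Real.add_one_le_exp x]
  have hepos : 0 < Real.exp x := Real.exp_pos x
  rw [Real.exp_neg, div_le_iff₀ (by positivity : (0:ℝ) < Real.exp x ^ 2 / 16)]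
  have hid : 16 * (Real.exp x)⁻¹ * (Real.exp x ^ 2 / 16) = Real.exp x := by
    field_simp
  rw [hid]
  exact hxex


def dval (A Λ l u : ℝ) : ℝ :=
  (2 * Λ)⁻¹ * (((Real.sinh (Real.sqrt A * l / Λ * u)) ^ 2)⁻¹ *
    ((Real.sinh (Real.sqrt A * l / Λ * u) * Real.cosh (Real.sqrt A * l / Λ * u)
      - Real.sqrt A * l / Λ * u) / (2 * (Real.sqrt A * l / Λ))))
  - (4 * Real.sqrt A)⁻¹ * l⁻¹


lemma diff_eq (T A : ℝ) (hA : 0 < A) (σ : Matrix (Fin d) (Fin d) ℝ) (hσ : σ.PosDef)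
    (Λ : ℝ) (hΛ : 0 < Λ) (s : ℝ) (hs : s < T) :
    (2 * Λ)⁻¹ • (Matrix.of fun i j =>
          ∫ t in s..T, (Lmat T A σ Λ t s * Lmat T A σ Λ t s) i j)
        - (4 * Real.sqrt A)⁻¹ • σ⁻¹
      = (hσ.1.eigenvectorUnitary : Matrix (Fin d) (Fin d) ℝ)
          * diagonal (fun k => dval A Λ (hσ.1.eigenvalues k) (T - s))
          * star (hσ.1.eigenvectorUnitary : Matrix (Fin d) (Fin d) ℝ) := by
  set U : Matrix (Fin d) (Fin d) ℝ := (hσ.1.eigenvectorUnitary : Matrix (Fin d) (Fin d) ℝ)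
    with hUdef
  set lam : Fin d → ℝ := hσ.1.eigenvalues with hlamdef
  have hUmem : U ∈ Matrix.unitaryGroup (Fin d) ℝ := (hσ.1.eigenvectorUnitary).2
  have hU : U * star U = 1 := Matrix.mem_unitaryGroup_iff.mp hUmem
  have hU' : star U * U = 1 := Matrix.mem_unitaryGroup_iff'.mp hUmem
  have hsqrtA : 0 < Real.sqrt A := Real.sqrt_pos.mpr hA
  have hlam : ∀ k, 0 < lam k := fun k => hσ.eigenvalues_pos k
  have hspec : σ = U * diagonal lam * star U := by
    have h := hσ.1.spectral_theorem
    have h2 : (RCLike.ofReal ∘ hσ.1.eigenvalues : Fin d → ℝ) = lam := by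
      funext k; simp [hlamdef]
    rw [h2] at h
    exact h
  have hconj : ∀ a : ℝ, a • σ = U * diagonal (fun k => a * lam k) * star U := by
    intro a
    rw [hspec, conj_smul]
  have hsinh : ∀ a : ℝ, sinhM (a • σ)
      = U * diagonal (fun k => Real.sinh (a * lam k)) * star U := by
    intro a
    rw [hconj a, sinhM_conj _ _ hU, sinhM_diagonal]
  have hu : 0 < T - s := by linarith
  have hsne : ∀ k, Real.sinh (Real.sqrt A * (T - s) / Λ * lam k) ≠ 0 := by
    intro k
    have : 0 < Real.sqrt A * (T - s) / Λ * lam k :=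
      mul_pos (div_pos (mul_pos hsqrtA hu) hΛ) (hlam k)
    exact (Real.sinh_pos_iff.mpr this).ne'
  -- L matrix diagonalized
  set g : ℝ → Fin d → ℝ := fun t k =>
    Real.sinh (Real.sqrt A * (T - t) / Λ * lam k)
      * (Real.sinh (Real.sqrt A * (T - s) / Λ * lam k))⁻¹ with hgdef
  have hL : ∀ t : ℝ, Lmat T A σ Λ t s = U * diagonal (g t) * star U := by
    intro t
    rw [Lmat, hsinh, hsinh, conj_inv U hU hU' _ hsne, conj_mul U hU']
  have hLL : ∀ t : ℝ, Lmat T A σ Λ t s * Lmat T A σ Λ t s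
      = U * diagonal (fun k => g t k * g t k) * star U := by
    intro t
    rw [hL t, conj_mul U hU']
  -- the integral of each diagonal entry
  set b : Fin d → ℝ := fun k => Real.sqrt A * lam k / Λ with hbdef
  have hb : ∀ k, 0 < b k := by
    intro k; simp only [hbdef]; exact div_pos (mul_pos hsqrtA (hlam k)) hΛ
  have hgcont : ∀ k, Continuous (fun t => g t k * g t k) := by
    intro k
    have hc1 : Continuous (fun t : ℝ => Real.sqrt A * (T - t) / Λ * lam k) :=
      (((continuous_const.mul (continuous_const.sub continuous_id)).div_const Λ).mul
        continuous_const)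
    have hc2 : Continuous (fun t : ℝ => g t k) := by
      simp only [hgdef]
      exact (Real.continuous_sinh.comp hc1).mul continuous_const
    exact hc2.mul hc2
  set Ival : Fin d → ℝ := fun k => ∫ t in s..T, g t k * g t k with hIdef
  have hIval : ∀ k, Ival k
      = ((Real.sinh (Real.sqrt A * lam k / Λ * (T - s))) ^ 2)⁻¹ *
        ((Real.sinh (Real.sqrt A * lam k / Λ * (T - s))
            * Real.cosh (Real.sqrt A * lam k / Λ * (T - s))
          - Real.sqrt A * lam k / Λ * (T - s)) / (2 * (Real.sqrt A * lam k / Λ))) := by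
    intro k
    have harg : ∀ t : ℝ, Real.sqrt A * (T - t) / Λ * lam k = b k * (T - t) := by
      intro t; simp only [hbdef]; ring
    have hrw : ∀ t : ℝ, g t k * g t k
        = Real.sinh (b k * (T - t)) ^ 2 * ((Real.sinh (b k * (T - s)) ^ 2)⁻¹) := by
      intro t
      simp only [hgdef, harg]
      ring
    have : Ival k = ∫ t in s..T,
        Real.sinh (b k * (T - t)) ^ 2 * ((Real.sinh (b k * (T - s)) ^ 2)⁻¹) := by
      simp only [hIdef]
      exact intervalIntegral.integral_congr (fun t _ => hrw t)
    rw [this, intervalIntegral.integral_mul_const, integral_sinh_sq (b k) (hb k)]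
    have harg2 : Real.sqrt A * lam k / Λ * (T - s) = b k * (T - s) := by
      simp only [hbdef]
    rw [harg2]
    ring
  -- entry-wise integral identity
  have hint : (Matrix.of fun i j =>
        ∫ t in s..T, (Lmat T A σ Λ t s * Lmat T A σ Λ t s) i j)
      = U * diagonal Ival * star U := by
    funext i j
    rw [Matrix.of_apply]
    have h1 : ∀ t : ℝ, (Lmat T A σ Λ t s * Lmat T A σ Λ t s) i j
        = ∑ k, U i k * (g t k * g t k) * U j k := by
      intro t
      rw [hLL t, conj_entry]
    rw [intervalIntegral.integral_congr (fun t _ => h1 t)]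
    rw [intervalIntegral.integral_finset_sum]
    · rw [conj_entry]
      congr 1
      funext k
      have h2 : ∀ t : ℝ, U i k * (g t k * g t k) * U j k
          = (U i k * U j k) * (g t k * g t k) := by intro t; ring
      rw [intervalIntegral.integral_congr (fun t _ => h2 t),
        intervalIntegral.integral_const_mul]
      simp only [hIdef]
      ring
    · intro k _
      apply Continuous.intervalIntegrable
      exact (continuous_const.mul ((hgcont k))).mul continuous_const
  -- inverse of sigma
  have hsiginv : σ⁻¹ = U * diagonal (fun k => (lam k)⁻¹) * star U := by
    rw [hspec, conj_inv U hU hU' _ (fun k => (hlam k).ne')]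
  rw [hint, hsiginv, conj_smul, conj_smul, conj_sub]
  have hfun : (fun k => (2 * Λ)⁻¹ * Ival k - (4 * Real.sqrt A)⁻¹ * (lam k)⁻¹)
      = fun k => dval A Λ (lam k) (T - s) := by
    funext k
    rw [hIval k]
    simp only [dval]
  rw [hfun]


lemma dval_eq (A Λ l u : ℝ) (hΛ : Λ ≠ 0) (hsA : Real.sqrt A ≠ 0) (hl : l ≠ 0)
    (hS : Real.sinh (Real.sqrt A * l / Λ * u) ≠ 0) :
    dval A Λ l u = (4 * Real.sqrt A * l)⁻¹ *
      ((Real.sinh (Real.sqrt A * l / Λ * u) * Real.cosh (Real.sqrt A * l / Λ * u)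
          - Real.sqrt A * l / Λ * u) / (Real.sinh (Real.sqrt A * l / Λ * u)) ^ 2 - 1) := by
  simp only [dval]
  set y : ℝ := Real.sqrt A * l / Λ * u with hydef
  set S : ℝ := Real.sinh y with hSdef
  set C : ℝ := Real.cosh y with hCdef
  have hb : Real.sqrt A * l / Λ ≠ 0 := by
    apply div_ne_zero (mul_ne_zero hsA hl) hΛ
  field_simp
  ring

lemma dval_bound (A Λ l u e : ℝ) (hA : 0 < A) (hΛ : 0 < Λ) (hl : 0 < l) (he : 0 < e)
    (hu : e ≤ u) (hhalf : 1/2 ≤ Real.sqrt A * l * e / Λ) :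
    |dval A Λ l u| ≤ 4 / (Real.sqrt A * l) * Real.exp (-(Real.sqrt A * l * e / Λ)) := by
  have hsA : 0 < Real.sqrt A := Real.sqrt_pos.mpr hA
  have hb : 0 < Real.sqrt A * l / Λ := div_pos (mul_pos hsA hl) hΛ
  have hbe : Real.sqrt A * l * e / Λ = Real.sqrt A * l / Λ * e := by ring
  have hx : 1/2 ≤ Real.sqrt A * l / Λ * u := by
    rw [hbe] at hhalf
    calc (1:ℝ)/2 ≤ Real.sqrt A * l / Λ * e := hhalf
      _ ≤ Real.sqrt A * l / Λ * u := by nlinarith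
  have hx0 : 0 < Real.sqrt A * l / Λ * u := lt_of_lt_of_le (by norm_num) hx
  have hs0 : 0 < Real.sinh (Real.sqrt A * l / Λ * u) := Real.sinh_pos_iff.mpr hx0
  rw [dval_eq A Λ l u hΛ.ne' hsA.ne' hl.ne' hs0.ne']
  rw [abs_mul, abs_of_pos (show (0:ℝ) < (4 * Real.sqrt A * l)⁻¹ by
    exact inv_pos.mpr (by nlinarith))]
  calc (4 * Real.sqrt A * l)⁻¹ *
        |(Real.sinh (Real.sqrt A * l / Λ * u) * Real.cosh (Real.sqrt A * l / Λ * u)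
            - Real.sqrt A * l / Λ * u) / (Real.sinh (Real.sqrt A * l / Λ * u)) ^ 2 - 1|
      ≤ (4 * Real.sqrt A * l)⁻¹ * (16 * Real.exp (-(Real.sqrt A * l / Λ * u))) := by
        apply mul_le_mul_of_nonneg_left (hyp_bound _ hx)
        exact le_of_lt (inv_pos.mpr (by nlinarith))
    _ ≤ (4 * Real.sqrt A * l)⁻¹ * (16 * Real.exp (-(Real.sqrt A * l * e / Λ))) := by
        apply mul_le_mul_of_nonneg_left _ (le_of_lt (inv_pos.mpr (by nlinarith)))
        apply mul_le_mul_of_nonneg_left _ (by norm_num)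
        apply Real.exp_le_exp.mpr
        rw [hbe]
        nlinarith
    _ = 4 / (Real.sqrt A * l) * Real.exp (-(Real.sqrt A * l * e / Λ)) := by
        have h4l : Real.sqrt A * l ≠ 0 := (mul_pos hsA hl).ne'
        have : (4 * Real.sqrt A * l)⁻¹ * 16 = 4 / (Real.sqrt A * l) := by
          field_simp
          ring
        rw [← this]
        ring

end Stmt10Aux

open Stmt10Aux in
/-- For every `ε ∈ (0,T)`,
`lim_{Λ↓0} sup_{0 ≤ s ≤ T−ε} ‖(1/(2Λ))·∫_s^T (L^Λ_{t,s})² dt − σ⁻¹/(4√A)‖ = 0`. -/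
theorem stmt10 (T : ℝ) (hT : 0 < T) {d : ℕ} (hd : 1 ≤ d)
    (σ : Matrix (Fin d) (Fin d) ℝ) (hσ : σ.PosDef) (A : ℝ) (hA : 0 < A) :
    ∀ ε : ℝ, 0 < ε → ε < T →
      Tendsto (fun Λ : ℝ =>
          sSup {r | ∃ s : ℝ, 0 ≤ s ∧ s ≤ T - ε ∧
            r = matNorm ((2 * Λ)⁻¹ •
                  (Matrix.of fun i j =>
                    ∫ t in s..T, (Lmat T A σ Λ t s * Lmat T A σ Λ t s) i j)
                - (4 * Real.sqrt A)⁻¹ • σ⁻¹)})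
        (nhdsWithin 0 (Set.Ioi 0)) (nhds 0) := by
  intro ε hε hεT
  have hsA : 0 < Real.sqrt A := Real.sqrt_pos.mpr hA
  set lam : Fin d → ℝ := hσ.1.eigenvalues with hlamdef
  have hlam : ∀ k, 0 < lam k := fun k => hσ.eigenvalues_pos k
  set U : Matrix (Fin d) (Fin d) ℝ := (hσ.1.eigenvectorUnitary : Matrix (Fin d) (Fin d) ℝ)
    with hUdef
  have hUmem : U ∈ Matrix.unitaryGroup (Fin d) ℝ := (hσ.1.eigenvectorUnitary).2
  have hU : U * star U = 1 := Matrix.mem_unitaryGroup_iff.mp hUmem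
  set c : ℝ → ℝ := fun Λ =>
    ∑ k, 4 / (Real.sqrt A * lam k) * Real.exp (-(Real.sqrt A * lam k * ε / Λ)) with hcdef
  have hc0 : ∀ Λ, 0 ≤ c Λ := by
    intro Λ
    apply Finset.sum_nonneg
    intro k _
    exact le_of_lt (mul_pos (div_pos (by norm_num) (mul_pos hsA (hlam k))) (Real.exp_pos _))
  have hctend : Tendsto c (nhdsWithin 0 (Set.Ioi 0)) (nhds 0) := by
    have hterm : ∀ k : Fin d, Tendsto
        (fun Λ : ℝ => 4 / (Real.sqrt A * lam k) * Real.exp (-(Real.sqrt A * lam k * ε / Λ)))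
        (nhdsWithin 0 (Set.Ioi 0)) (nhds 0) := by
      intro k
      have hck : 0 < Real.sqrt A * lam k * ε := mul_pos (mul_pos hsA (hlam k)) hε
      have h1 : Tendsto (fun Λ : ℝ => Real.sqrt A * lam k * ε * Λ⁻¹)
          (nhdsWithin 0 (Set.Ioi 0)) atTop :=
        Tendsto.const_mul_atTop hck tendsto_inv_nhdsGT_zero
      have h1' : Tendsto (fun Λ : ℝ => Real.sqrt A * lam k * ε / Λ)
          (nhdsWithin 0 (Set.Ioi 0)) atTop := by
        simpa [div_eq_mul_inv] using h1
      have h2 : Tendsto (fun Λ : ℝ => -(Real.sqrt A * lam k * ε / Λ))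
          (nhdsWithin 0 (Set.Ioi 0)) atBot := by
        have := tendsto_neg_atTop_atBot.comp h1'
        simpa [Function.comp_def] using this
      have h3 := Real.tendsto_exp_atBot.comp h2
      have h4 : Tendsto (fun Λ : ℝ => Real.exp (-(Real.sqrt A * lam k * ε / Λ)))
          (nhdsWithin 0 (Set.Ioi 0)) (nhds 0) := by
        simpa [Function.comp_def] using h3
      simpa using h4.const_mul (4 / (Real.sqrt A * lam k))
    have := tendsto_finset_sum Finset.univ (fun k _ => hterm k)
    simpa [hcdef] using this
  have hgtend : Tendsto (fun Λ => (d : ℝ) * ((d : ℝ) * c Λ))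
      (nhdsWithin 0 (Set.Ioi 0)) (nhds 0) := by
    have := (hctend.const_mul ((d : ℝ))).const_mul ((d : ℝ))
    simpa using this
  apply squeeze_zero' _ _ hgtend
  · apply Filter.Eventually.of_forall
    intro Λ
    apply Real.sSup_nonneg
    rintro r ⟨s, _, _, rfl⟩
    exact Real.sqrt_nonneg _
  · have hhalfk : ∀ k : Fin d, ∀ᶠ Λ in nhdsWithin (0:ℝ) (Set.Ioi 0),
        1/2 ≤ Real.sqrt A * lam k * ε / Λ := by
      intro k
      have hck : 0 < Real.sqrt A * lam k * ε := mul_pos (mul_pos hsA (hlam k)) hε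
      have hmem : Set.Ioc (0:ℝ) (2 * (Real.sqrt A * lam k * ε))
          ∈ nhdsWithin (0:ℝ) (Set.Ioi 0) :=
        Ioc_mem_nhdsGT_of_mem ⟨le_refl 0, by linarith⟩
      filter_upwards [hmem] with Λ hΛ
      obtain ⟨h1, h2⟩ := hΛ
      rw [le_div_iff₀ h1]
      linarith
    have hhalf : ∀ᶠ Λ in nhdsWithin (0:ℝ) (Set.Ioi 0),
        ∀ k : Fin d, 1/2 ≤ Real.sqrt A * lam k * ε / Λ := eventually_all.mpr hhalfk
    filter_upwards [hhalf, self_mem_nhdsWithin] with Λ hp hΛpos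
    rw [Set.mem_Ioi] at hΛpos
    apply Real.sSup_le _ (mul_nonneg (Nat.cast_nonneg d)
      (mul_nonneg (Nat.cast_nonneg d) (hc0 Λ)))
    rintro r ⟨s, hs0, hsle, rfl⟩
    have hsT : s < T := by linarith
    rw [diff_eq T A hA σ hσ Λ hΛpos s hsT]
    apply matNorm_conj_le U hU _ (c Λ) (hc0 Λ)
    intro k
    calc |dval A Λ (lam k) (T - s)|
        ≤ 4 / (Real.sqrt A * lam k) * Real.exp (-(Real.sqrt A * lam k * ε / Λ)) :=
          dval_bound A Λ (lam k) (T - s) ε hA hΛpos (hlam k) hε (by linarith) (hp k)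
      _ ≤ c Λ := by
          rw [hcdef]
          exact Finset.single_le_sum
            (f := fun k => 4 / (Real.sqrt A * lam k)
              * Real.exp (-(Real.sqrt A * lam k * ε / Λ)))
            (fun k2 _ => le_of_lt (mul_pos (div_pos (by norm_num)
              (mul_pos hsA (hlam k2))) (Real.exp_pos _))) (Finset.mem_univ k)
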